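/- Let A and X₁ be commuting bounded operators on a complex Hilbert space. Then ‖q(A, X₁)‖ ≤ sup_{w ∈ 𝔹̄₂} |q(w)| for every polynomial q ∈ ℂ[z₀, z₁] if and only if ‖p(A, X₁, 0, 0)‖ ≤ sup_{w ∈ ℍ̄} |p(w)| for every polynomial p ∈ ℂ[z₀, z₁, z₂, z₃], where 0 denotes the zero operator (i.e. (A, X₁) is a 𝔹₂-contraction if and only if (A, X₁, 0, 0) is an ℍ-contraction). -/

import Mathlib

noncomputable section

open Complex

/-- The closed tetrablock `𝔼̄ ⊆ ℂ³`. -/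
def closedTetrablock : Set (ℂ × ℂ × ℂ) :=
  {x | ‖x.1‖ ≤ 1 ∧
    0 ≤ 1 + ‖x.1‖ ^ 2 - ‖x.2.1‖ ^ 2 - ‖x.2.2‖ ^ 2
      - 2 * ‖x.1 - (starRingEnd ℂ) x.2.1 * x.2.2‖}

/-- The closed hexablock `ℍ̄ ⊆ ℂ⁴`. -/
def closedHexablock : Set (ℂ × ℂ × ℂ × ℂ) :=
  {w | (w.2.1, w.2.2.1, w.2.2.2) ∈ closedTetrablock ∧
    ∀ z₁ z₂ : ℂ, ‖z₁‖ < 1 → ‖z₂‖ < 1 →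
      ‖w.1‖ * Real.sqrt ((1 - ‖z₁‖ ^ 2) * (1 - ‖z₂‖ ^ 2)) ≤
        ‖1 - w.2.1 * z₁ - w.2.2.1 * z₂ + w.2.2.2 * z₁ * z₂‖}

/-- `sup_{w ∈ ℍ̄} |p(w)|` for a polynomial `p` in four variables. -/
def hexPolySup (p : MvPolynomial (Fin 4) ℂ) : ℝ :=
  sSup ((fun w : ℂ × ℂ × ℂ × ℂ =>
    ‖MvPolynomial.eval ![w.1, w.2.1, w.2.2.1, w.2.2.2] p‖) '' closedHexablock)

/-- `sup_{x ∈ 𝔼̄} |q(x)|` for a polynomial `q` in three variables. -/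
def tetraPolySup (q : MvPolynomial (Fin 3) ℂ) : ℝ :=
  sSup ((fun x : ℂ × ℂ × ℂ =>
    ‖MvPolynomial.eval ![x.1, x.2.1, x.2.2] q‖) '' closedTetrablock)

variable {H : Type*} [NormedAddCommGroup H] [InnerProductSpace ℂ H] [CompleteSpace H]

/-- Evaluation of a four-variable polynomial at a commuting quadruple of
operators. -/
def evalOp4 (T₀ T₁ T₂ T₃ : H →L[ℂ] H) (p : MvPolynomial (Fin 4) ℂ) : H →L[ℂ] H :=
  p.support.sum fun s =>
    MvPolynomial.coeff s p • (T₀ ^ s 0 * T₁ ^ s 1 * T₂ ^ s 2 * T₃ ^ s 3)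

/-- Evaluation of a three-variable polynomial at a commuting triple of
operators. -/
def evalOp3 (T₁ T₂ T₃ : H →L[ℂ] H) (q : MvPolynomial (Fin 3) ℂ) : H →L[ℂ] H :=
  q.support.sum fun s =>
    MvPolynomial.coeff s q • (T₁ ^ s 0 * T₂ ^ s 1 * T₃ ^ s 2)

/-- The closed Euclidean unit ball `𝔹̄₂ ⊆ ℂ²`. -/
def closedBiball : Set (ℂ × ℂ) :=
  {z | ‖z.1‖ ^ 2 + ‖z.2‖ ^ 2 ≤ 1}

/-- `sup_{w ∈ 𝔹̄₂} |q(w)|` for a polynomial `q` in two variables. -/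
def biballPolySup (q : MvPolynomial (Fin 2) ℂ) : ℝ :=
  sSup ((fun z : ℂ × ℂ =>
    ‖MvPolynomial.eval ![z.1, z.2] q‖) '' closedBiball)

/-- Evaluation of a two-variable polynomial at a commuting pair of
operators. -/
def evalOp2 (T₀ T₁ : H →L[ℂ] H) (q : MvPolynomial (Fin 2) ℂ) : H →L[ℂ] H :=
  q.support.sum fun s => MvPolynomial.coeff s q • (T₀ ^ s 0 * T₁ ^ s 1)

open MvPolynomial

set_option linter.unusedSectionVars false

noncomputable def squish : MvPolynomial (Fin 4) ℂ →ₐ[ℂ] MvPolynomial (Fin 2) ℂ :=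
  aeval ![X 0, X 1, 0, 0]

lemma eval_squish (v : Fin 2 → ℂ) (p : MvPolynomial (Fin 4) ℂ) :
    eval v (squish p) = eval ![v 0, v 1, 0, 0] p := by
  rw [squish, aeval_def, eval_eval₂]
  have h1 : (eval v).comp (algebraMap ℂ (MvPolynomial (Fin 2) ℂ)) = RingHom.id ℂ := by
    ext c; simp [MvPolynomial.algebraMap_eq]
  rw [h1, eval₂_id]
  have h2 : (fun s => (eval v) (![X 0, X 1, 0, 0] s)) = ![v 0, v 1, 0, 0] := by
    funext i; fin_cases i <;> simp
  rw [h2]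

lemma evalOp2_monomial (T₀ T₁ : H →L[ℂ] H) (s : Fin 2 →₀ ℕ) (c : ℂ) :
    evalOp2 T₀ T₁ (monomial s c) = c • (T₀ ^ s 0 * T₁ ^ s 1) := by
  classical
  unfold evalOp2
  rw [support_monomial]
  split_ifs with hc
  · simp [hc]
  · simp

lemma evalOp2_add (T₀ T₁ : H →L[ℂ] H) (p q : MvPolynomial (Fin 2) ℂ) :
    evalOp2 T₀ T₁ (p + q) = evalOp2 T₀ T₁ p + evalOp2 T₀ T₁ q := by
  classical
  unfold evalOp2
  have h : ∀ (r : MvPolynomial (Fin 2) ℂ), r.support ⊆ p.support ∪ q.support →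
      r.support.sum (fun s => coeff s r • (T₀ ^ s 0 * T₁ ^ s 1)) =
        (p.support ∪ q.support).sum (fun s => coeff s r • (T₀ ^ s 0 * T₁ ^ s 1)) := fun r hr =>
    Finset.sum_subset hr (fun s _ hs => by rw [notMem_support_iff.mp hs, zero_smul])
  rw [h (p + q) support_add, h p Finset.subset_union_left, h q Finset.subset_union_right,
    ← Finset.sum_add_distrib]
  simp only [coeff_add, add_smul]

lemma evalOp4_monomial (T₀ T₁ T₂ T₃ : H →L[ℂ] H) (s : Fin 4 →₀ ℕ) (c : ℂ) :
    evalOp4 T₀ T₁ T₂ T₃ (monomial s c) = c • (T₀ ^ s 0 * T₁ ^ s 1 * T₂ ^ s 2 * T₃ ^ s 3) := by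
  classical
  unfold evalOp4
  rw [support_monomial]
  split_ifs with hc
  · simp [hc]
  · simp

lemma evalOp4_add (T₀ T₁ T₂ T₃ : H →L[ℂ] H) (p q : MvPolynomial (Fin 4) ℂ) :
    evalOp4 T₀ T₁ T₂ T₃ (p + q) = evalOp4 T₀ T₁ T₂ T₃ p + evalOp4 T₀ T₁ T₂ T₃ q := by
  classical
  unfold evalOp4
  have h : ∀ (r : MvPolynomial (Fin 4) ℂ), r.support ⊆ p.support ∪ q.support →
      r.support.sum (fun s => coeff s r • (T₀ ^ s 0 * T₁ ^ s 1 * T₂ ^ s 2 * T₃ ^ s 3)) =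
        (p.support ∪ q.support).sum (fun s => coeff s r • (T₀ ^ s 0 * T₁ ^ s 1 * T₂ ^ s 2 * T₃ ^ s 3)) := fun r hr =>
    Finset.sum_subset hr (fun s _ hs => by rw [notMem_support_iff.mp hs, zero_smul])
  rw [h (p + q) support_add, h p Finset.subset_union_left, h q Finset.subset_union_right,
    ← Finset.sum_add_distrib]
  simp only [coeff_add, add_smul]

lemma squish_monomial (s : Fin 4 →₀ ℕ) (c : ℂ) :
    squish (monomial s c) =
      C c * X 0 ^ s 0 * X 1 ^ s 1 * (0 : MvPolynomial (Fin 2) ℂ) ^ s 2 * 0 ^ s 3 := by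
  rw [squish, aeval_monomial]
  rw [Finsupp.prod_fintype _ _ (fun i => pow_zero _), Fin.prod_univ_four]
  simp [mul_assoc, MvPolynomial.algebraMap_eq]

lemma evalOp2_zero (T₀ T₁ : H →L[ℂ] H) : evalOp2 T₀ T₁ 0 = 0 := by
  simp [evalOp2]

lemma key (T₀ T₁ : H →L[ℂ] H) (p : MvPolynomial (Fin 4) ℂ) :
    evalOp4 T₀ T₁ 0 0 p = evalOp2 T₀ T₁ (squish p) := by
  induction p using MvPolynomial.induction_on' with
  | add p q hp hq => rw [evalOp4_add, map_add, evalOp2_add, hp, hq]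
  | monomial s c =>
    rw [evalOp4_monomial, squish_monomial]
    rcases Nat.eq_zero_or_pos (s 2) with h2 | h2
    · rcases Nat.eq_zero_or_pos (s 3) with h3 | h3
      · rw [h2, h3]
        simp only [pow_zero, mul_one]
        have : (C c * X 0 ^ s 0 * X 1 ^ s 1 : MvPolynomial (Fin 2) ℂ)
            = monomial (Finsupp.single 0 (s 0) + Finsupp.single 1 (s 1)) c := by
          rw [X_pow_eq_monomial, X_pow_eq_monomial, C_mul_monomial, monomial_mul]
          simp
        rw [this, evalOp2_monomial]
        simp
      · rw [(zero_pow (Nat.pos_iff_ne_zero.mp h3) : (0 : MvPolynomial (Fin 2) ℂ) ^ s 3 = 0),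
          (zero_pow (Nat.pos_iff_ne_zero.mp h3) : (0 : H →L[ℂ] H) ^ s 3 = 0)]
        simp [evalOp2_zero]
    · rw [(zero_pow (Nat.pos_iff_ne_zero.mp h2) : (0 : MvPolynomial (Fin 2) ℂ) ^ s 2 = 0),
        (zero_pow (Nat.pos_iff_ne_zero.mp h2) : (0 : H →L[ℂ] H) ^ s 2 = 0)]
      simp [evalOp2_zero]

def emb : Fin 2 → Fin 4 := Fin.castLE (by norm_num)

lemma squish_rename (q : MvPolynomial (Fin 2) ℂ) : squish (rename emb q) = q := by
  rw [squish, aeval_rename]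
  have : (![X 0, X 1, 0, 0] ∘ emb : Fin 2 → MvPolynomial (Fin 2) ℂ) = X := by
    funext i; fin_cases i <;> rfl
  rw [this, aeval_X_left, AlgHom.id_apply]

lemma eval_rename' (v : Fin 4 → ℂ) (q : MvPolynomial (Fin 2) ℂ) :
    eval v (rename emb q) = eval ![v 0, v 1] q := by
  rw [eval_rename]
  have : (v ∘ emb) = ![v 0, v 1] := by funext i; fin_cases i <;> rfl
  rw [this]

lemma mem_hex_of_mem_ball {z : ℂ × ℂ} (hz : z ∈ closedBiball) :
    (z.1, z.2, (0:ℂ), (0:ℂ)) ∈ closedHexablock := by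
  have hz' : ‖z.1‖ ^ 2 + ‖z.2‖ ^ 2 ≤ 1 := hz
  have ha0 : 0 ≤ ‖z.1‖ := norm_nonneg _
  have hb0 : 0 ≤ ‖z.2‖ := norm_nonneg _
  have hb1 : ‖z.2‖ ≤ 1 := by nlinarith [sq_nonneg (‖z.1‖)]
  refine ⟨⟨hb1, ?_⟩, ?_⟩
  · show (0:ℝ) ≤ 1 + ‖z.2‖ ^ 2 - ‖(0:ℂ)‖ ^ 2 - ‖(0:ℂ)‖ ^ 2
      - 2 * ‖z.2 - (starRingEnd ℂ) (0:ℂ) * 0‖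
    simp only [map_zero, mul_zero, sub_zero, norm_zero]
    nlinarith [sq_nonneg (1 - ‖z.2‖)]
  · intro z₁ z₂ h₁ h₂
    simp only [zero_mul, sub_zero, add_zero, mul_zero]
    set a := ‖z.1‖
    set b := ‖z.2‖
    set r := ‖z₁‖ with hr
    set r₂ := ‖z₂‖
    have hr0 : 0 ≤ r := norm_nonneg _
    have hr20 : 0 ≤ r₂ := norm_nonneg _
    have hr1 : 0 ≤ 1 - r ^ 2 := by nlinarith
    have hr21 : 0 ≤ 1 - r₂ ^ 2 := by nlinarith
    have hP : 0 ≤ (1 - r ^ 2) * (1 - r₂ ^ 2) := mul_nonneg hr1 hr21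
    have hbr : b * r ≤ 1 := by nlinarith
    have key : a * Real.sqrt ((1 - r ^ 2) * (1 - r₂ ^ 2)) ≤ 1 - b * r := by
      have h1 : a * Real.sqrt ((1 - r ^ 2) * (1 - r₂ ^ 2))
          = Real.sqrt (a ^ 2 * ((1 - r ^ 2) * (1 - r₂ ^ 2))) := by
        rw [Real.sqrt_mul (sq_nonneg a), Real.sqrt_sq ha0]
      have h2 : (1 - b * r) = Real.sqrt ((1 - b * r) ^ 2) := by
        rw [Real.sqrt_sq (by linarith)]
      rw [h1, h2]
      apply Real.sqrt_le_sqrt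
      nlinarith [sq_nonneg (b - r), sq_nonneg (1 - r ^ 2), mul_nonneg (mul_nonneg (sq_nonneg a) (by nlinarith : (0:ℝ) ≤ 1 - r ^ 2)) (by nlinarith : (0:ℝ) ≤ r₂ ^ 2), mul_nonneg (by nlinarith : (0:ℝ) ≤ 1 - r^2) (by nlinarith : (0:ℝ) ≤ 1 - b^2 - a^2)]
    refine key.trans ?_
    calc 1 - b * r = ‖(1:ℂ)‖ - ‖z.2 * z₁‖ := by
          simp [norm_mul]; rfl
      _ ≤ ‖1 - z.2 * z₁‖ := norm_sub_norm_le _ _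
      _ = ‖1 - z.2 * z₁‖ := rfl

set_option maxHeartbeats 1000000 in

lemma mem_ball_of_mem_hex {w : ℂ × ℂ × ℂ × ℂ} (hw : w ∈ closedHexablock) :
    (w.1, w.2.1) ∈ closedBiball := by
  obtain ⟨⟨hb1, _⟩, hcond⟩ := hw
  set a := ‖w.1‖ with ha
  set b := ‖w.2.1‖ with hb
  have ha0 : 0 ≤ a := norm_nonneg _
  have hb0 : 0 ≤ b := norm_nonneg _
  have ha1 : a ≤ 1 := by
    have := hcond 0 0 (by simp) (by simp)
    simpa using this
  show a ^ 2 + b ^ 2 ≤ 1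
  by_contra hcon
  push_neg at hcon
  have hbpos : 0 < b := by
    rcases lt_or_ge 0 b with h | h
    · exact h
    · have : b = 0 := le_antisymm h hb0
      rw [this] at hcon; nlinarith
  have hapos : 0 < a := by
    rcases lt_or_ge 0 a with h | h
    · exact h
    · have : a = 0 := le_antisymm h ha0
      rw [this] at hcon; nlinarith
  set s := a ^ 2 + b ^ 2 with hs
  have hs1 : 1 < s := hcon
  set r : ℝ := b / s with hrdef
  have hspos : 0 < s := by nlinarith
  have hr0 : 0 ≤ r := div_nonneg hb0 hspos.le
  have hrs : r * s = b := div_mul_cancel₀ b hspos.ne'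
  have hr1 : r < 1 := by
    rw [hrdef, div_lt_one hspos]
    nlinarith
  -- choose z₁ with |z₁| = r and x₁ * z₁ = r * b
  set z₁ : ℂ := ((r / b : ℝ) : ℂ) * (starRingEnd ℂ) w.2.1 with hz₁
  have habs : ‖z₁‖ = r := by
    rw [hz₁, norm_mul, Complex.norm_real, Real.norm_eq_abs, Complex.norm_conj, ← hb,
      _root_.abs_of_nonneg (div_nonneg hr0 hb0)]
    field_simp
  have hx₁z₁ : w.2.1 * z₁ = ((r * b : ℝ) : ℂ) := by
    rw [hz₁]
    rw [show w.2.1 * (((r / b : ℝ) : ℂ) * (starRingEnd ℂ) w.2.1)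
        = ((r / b : ℝ) : ℂ) * (w.2.1 * (starRingEnd ℂ) w.2.1) by ring]
    rw [Complex.mul_conj, Complex.normSq_eq_norm_sq, ← hb, ← Complex.ofReal_mul]
    congr 1
    field_simp
  have hmain := hcond z₁ 0 (by rw [habs]; exact hr1) (by simp)
  rw [hx₁z₁] at hmain
  simp only [map_zero, mul_zero, zero_mul, sub_zero, add_zero, norm_zero] at hmain
  -- hmain : a * √((1 - r²)(1 - 0²)) ≤ |1 - (r*b : ℝ)|
  rw [habs] at hmain
  have hrb1 : r * b ≤ 1 := by nlinarith
  have habs2 : ‖1 - ((r * b : ℝ) : ℂ)‖ = 1 - r * b := by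
    rw [show (1 : ℂ) - ((r * b : ℝ) : ℂ) = ((1 - r * b : ℝ) : ℂ) by push_cast; ring,
      Complex.norm_real, Real.norm_eq_abs, _root_.abs_of_nonneg (by linarith : (0:ℝ) ≤ 1 - r * b)]
  rw [habs2] at hmain
  have hsq : a ^ 2 * (1 - r ^ 2) ≤ (1 - r * b) ^ 2 := by
    have h1 : a * Real.sqrt ((1 - r ^ 2) * (1 - (0:ℝ) ^ 2))
        = Real.sqrt (a ^ 2 * (1 - r ^ 2)) := by
      rw [show ((0:ℝ)^2 = 0) by ring, sub_zero, mul_one, Real.sqrt_mul (sq_nonneg a),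
        Real.sqrt_sq ha0]
    rw [h1] at hmain
    have h2 : 0 ≤ a ^ 2 * (1 - r ^ 2) := by nlinarith
    calc a ^ 2 * (1 - r ^ 2) = Real.sqrt (a ^ 2 * (1 - r ^ 2)) ^ 2 := by
          rw [Real.sq_sqrt h2]
      _ ≤ (1 - r * b) ^ 2 := by
          apply pow_le_pow_left₀ (Real.sqrt_nonneg _) hmain
  -- contradiction
  have h2 : a ^ 2 * (1 - r ^ 2) * s ^ 2 ≤ (1 - r * b) ^ 2 * s ^ 2 :=
    mul_le_mul_of_nonneg_right hsq (sq_nonneg s)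
  have e1 : a ^ 2 * (1 - r ^ 2) * s ^ 2 = a ^ 2 * (s ^ 2 - (r * s) ^ 2) := by ring
  have e2 : (1 - r * b) ^ 2 * s ^ 2 = (s - (r * s) * b) ^ 2 := by ring
  rw [e1, e2, hrs] at h2
  nlinarith [h2, hs, hs1, hapos, hbpos, hspos,
    mul_pos (mul_pos hspos (sub_pos.mpr hs1)) (pow_pos hapos 2)]

lemma hex_bounded : Bornology.IsBounded closedHexablock := by
  rw [Metric.isBounded_iff_subset_closedBall 0]
  refine ⟨2, fun w hw => ?_⟩
  obtain ⟨⟨h1, h2⟩, hcond⟩ := hw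
  have h1' : ‖w.2.1‖ ≤ 1 := h1
  have h2' : 0 ≤ 1 + ‖w.2.1‖ ^ 2 - ‖w.2.2.1‖ ^ 2 - ‖w.2.2.2‖ ^ 2
      - 2 * ‖w.2.1 - (starRingEnd ℂ) w.2.2.1 * w.2.2.2‖ := h2
  have h0 : 0 ≤ ‖w.2.1 - (starRingEnd ℂ) w.2.2.1 * w.2.2.2‖ :=
    norm_nonneg _
  have ha : ‖w.1‖ ≤ 1 := by
    have := hcond 0 0 (by simp) (by simp)
    simpa using this
  have hx2 : ‖w.2.2.1‖ ≤ 2 := by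
    nlinarith [norm_nonneg w.2.2.1, sq_nonneg (‖w.2.2.2‖),
      sq_nonneg (‖w.2.2.1‖ - 2),
      mul_nonneg (norm_nonneg w.2.1) (sub_nonneg.mpr h1')]
  have hx3 : ‖w.2.2.2‖ ≤ 2 := by
    nlinarith [norm_nonneg w.2.2.2, sq_nonneg (‖w.2.2.1‖),
      sq_nonneg (‖w.2.2.2‖ - 2),
      mul_nonneg (norm_nonneg w.2.1) (sub_nonneg.mpr h1')]
  rw [Metric.mem_closedBall, dist_zero_right]
  rw [Prod.norm_def, Prod.norm_def, Prod.norm_def]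
  exact max_le (by linarith) (max_le (by linarith) (max_le hx2 hx3))

lemma ball_bounded : Bornology.IsBounded closedBiball := by
  rw [Metric.isBounded_iff_subset_closedBall 0]
  refine ⟨1, fun z hz => ?_⟩
  have hz' : ‖z.1‖ ^ 2 + ‖z.2‖ ^ 2 ≤ 1 := hz
  rw [Metric.mem_closedBall, dist_zero_right, Prod.norm_def]
  exact max_le (by nlinarith [sq_nonneg (‖z.1‖), sq_nonneg (‖z.2‖), norm_nonneg (z.1 : ℂ)])
    (by nlinarith [sq_nonneg (‖z.1‖), sq_nonneg (‖z.2‖), norm_nonneg (z.2 : ℂ)])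

lemma bddAbove_image_of_bounded {E : Type*} [NormedAddCommGroup E] [ProperSpace E]
    {sSet : Set E} (hs : Bornology.IsBounded sSet) {f : E → ℝ} (hf : Continuous f) :
    BddAbove (f '' sSet) := by
  obtain ⟨R, hR⟩ := (Metric.isBounded_iff_subset_closedBall 0).mp hs
  have hcomp : IsCompact (Metric.closedBall (0:E) R) := isCompact_closedBall _ _
  exact ((hcomp.image hf).bddAbove).mono (Set.image_mono hR)

lemma cont4 (p : MvPolynomial (Fin 4) ℂ) :
    Continuous (fun w : ℂ × ℂ × ℂ × ℂ =>
      ‖MvPolynomial.eval ![w.1, w.2.1, w.2.2.1, w.2.2.2] p‖) := by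
  apply continuous_norm.comp
  refine (MvPolynomial.continuous_eval p).comp (continuous_pi fun i => ?_)
  fin_cases i
  · exact continuous_fst
  · exact continuous_fst.comp continuous_snd
  · exact continuous_fst.comp (continuous_snd.comp continuous_snd)
  · exact continuous_snd.comp (continuous_snd.comp continuous_snd)

lemma cont2 (q : MvPolynomial (Fin 2) ℂ) :
    Continuous (fun z : ℂ × ℂ => ‖MvPolynomial.eval ![z.1, z.2] q‖) := by
  apply continuous_norm.comp
  refine (MvPolynomial.continuous_eval q).comp (continuous_pi fun i => ?_)
  fin_cases i
  · exact continuous_fst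
  · exact continuous_snd

lemma hex_bddAbove (p : MvPolynomial (Fin 4) ℂ) :
    BddAbove ((fun w : ℂ × ℂ × ℂ × ℂ =>
      ‖MvPolynomial.eval ![w.1, w.2.1, w.2.2.1, w.2.2.2] p‖) '' closedHexablock) :=
  bddAbove_image_of_bounded hex_bounded (cont4 p)

lemma ball_bddAbove (q : MvPolynomial (Fin 2) ℂ) :
    BddAbove ((fun z : ℂ × ℂ =>
      ‖MvPolynomial.eval ![z.1, z.2] q‖) '' closedBiball) :=
  bddAbove_image_of_bounded ball_bounded (cont2 q)

lemma zero_mem_ball : ((0:ℂ), (0:ℂ)) ∈ closedBiball := by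
  show ‖(0:ℂ)‖ ^ 2 + ‖(0:ℂ)‖ ^ 2 ≤ 1
  simp

lemma biballPolySup_nonneg (q : MvPolynomial (Fin 2) ℂ) : 0 ≤ biballPolySup q := by
  have hm : ‖MvPolynomial.eval ![(0:ℂ), (0:ℂ)] q‖ ∈
      (fun z : ℂ × ℂ => ‖MvPolynomial.eval ![z.1, z.2] q‖) '' closedBiball :=
    ⟨((0:ℂ), (0:ℂ)), zero_mem_ball, rfl⟩
  exact le_trans (norm_nonneg _) (le_csSup (ball_bddAbove q) hm)

lemma hexPolySup_nonneg (p : MvPolynomial (Fin 4) ℂ) : 0 ≤ hexPolySup p := by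
  have hmem := mem_hex_of_mem_ball zero_mem_ball
  have hm : ‖MvPolynomial.eval ![(0:ℂ), (0:ℂ), (0:ℂ), (0:ℂ)] p‖ ∈
      (fun w : ℂ × ℂ × ℂ × ℂ =>
        ‖MvPolynomial.eval ![w.1, w.2.1, w.2.2.1, w.2.2.2] p‖) '' closedHexablock :=
    ⟨((0:ℂ), (0:ℂ), (0:ℂ), (0:ℂ)), hmem, rfl⟩
  exact le_trans (norm_nonneg _) (le_csSup (hex_bddAbove p) hm)

/-- `(A, X₁)` is a `𝔹₂`-contraction if and only if `(A, X₁, 0, 0)` is an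
`ℍ`-contraction. -/
theorem biball_contraction_iff_H_contraction
    (A X₁ : H →L[ℂ] H) (hAX : Commute A X₁) :
    (∀ q : MvPolynomial (Fin 2) ℂ, ‖evalOp2 A X₁ q‖ ≤ biballPolySup q) ↔
      ∀ p : MvPolynomial (Fin 4) ℂ, ‖evalOp4 A X₁ 0 0 p‖ ≤ hexPolySup p := by
  constructor
  · intro h p
    rw [key]
    refine (h (squish p)).trans ?_
    apply Real.sSup_le _ (hexPolySup_nonneg p)
    rintro x ⟨z, hz, rfl⟩
    show ‖MvPolynomial.eval ![z.1, z.2] (squish p)‖ ≤ hexPolySup p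
    have hv : (![(![z.1, z.2] : Fin 2 → ℂ) 0, (![z.1, z.2] : Fin 2 → ℂ) 1, 0, 0] : Fin 4 → ℂ)
        = ![z.1, z.2, 0, 0] := by funext i; fin_cases i <;> rfl
    rw [eval_squish, hv]
    have hmem := mem_hex_of_mem_ball hz
    exact le_csSup (hex_bddAbove p)
      ⟨(z.1, z.2, (0:ℂ), (0:ℂ)), hmem, rfl⟩
  · intro h q
    have hkey : evalOp2 A X₁ q = evalOp4 A X₁ 0 0 (MvPolynomial.rename emb q) := by
      rw [key, squish_rename]
    rw [hkey]
    refine (h _).trans ?_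
    apply Real.sSup_le _ (biballPolySup_nonneg q)
    rintro x ⟨w, hw, rfl⟩
    show ‖MvPolynomial.eval ![w.1, w.2.1, w.2.2.1, w.2.2.2]
      (MvPolynomial.rename emb q)‖ ≤ biballPolySup q
    have hv : (![(![w.1, w.2.1, w.2.2.1, w.2.2.2] : Fin 4 → ℂ) 0,
        (![w.1, w.2.1, w.2.2.1, w.2.2.2] : Fin 4 → ℂ) 1] : Fin 2 → ℂ)
        = ![w.1, w.2.1] := by funext i; fin_cases i <;> rfl
    rw [eval_rename', hv]
    have hmem := mem_ball_of_mem_hex hw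
    exact le_csSup (ball_bddAbove q) ⟨(w.1, w.2.1), hmem, rfl⟩
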